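/- Let Π be a ground DLP^A program (a classical disjunctive logic program with classical aggregates) and let Π' be the corresponding DFLP₁^FA program obtained by annotating every head atom and every body atom of every rule with the fuzzy annotation 1, and by replacing every classical aggregate atom f{S} ≺ T by the fuzzy aggregate atom (f_F(S') ≺ T):1, where S' annotates each term of S and each atom in its conjunction with 1. Let I ⊆ B_L be a classical interpretation and define the fuzzy interpretation I' by I'(a) = 1 if a ∈ I and I'(b) = 0 if b ∈ B_L \ I. Then I' is a fuzzy answer set of Π' if and only if I is a classical answer set of Π. -/

import Mathlib

open scoped Classical

noncomputable section

/-- Grade membership values: elements of the unit interval [0,1]. -/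
abbrev Grade := unitInterval

/-- An element ⟨X:U | C⟩ of a ground fuzzy set: a real term X, a grade U,
and a finite conjunction C of fuzzy annotated atoms. -/
structure FuzzyPair (Atom : Type) where
  term : ℝ
  grade : Grade
  conj : List (Atom × Grade)

/-- A ground fuzzy set: a set of pairs ⟨X:U | C⟩. -/
abbrev GroundFuzzySet (Atom : Type) := Finset (FuzzyPair Atom)

/-- Fuzzy aggregate function symbols. -/
inductive AggFun
  | sumF | timesF | minF | maxF | countF

/-- Comparison operators for aggregate atoms. -/
inductive CmpOp
  | eq | ne | lt | gt | le | ge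

def CmpOp.apply : CmpOp → ℝ → ℝ → Prop
  | .eq, x, t => x = t
  | .ne, x, t => x ≠ t
  | .lt, x, t => x < t
  | .gt, x, t => x > t
  | .le, x, t => x ≤ t
  | .ge, x, t => x ≥ t

/-- A conjunction of fuzzy annotated atoms is true w.r.t. I iff every a:μ in it has μ ≤ I(a). -/
def conjTrue {Atom : Type} (I : Atom → Grade) (C : List (Atom × Grade)) : Prop :=
  ∀ p ∈ C, p.2 ≤ I p.1

/-- S_I : the multiset {{ X:U | ⟨X:U | C⟩ ∈ S and C is true w.r.t. I }}. -/
def fuzzySetEval {Atom : Type} (I : Atom → Grade) (S : GroundFuzzySet Atom) :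
    Multiset (ℝ × Grade) :=
  (S.val.filter (fun p => conjTrue I p.conj)).map (fun p => (p.term, p.grade))

/-- Minimum of the grade (second) components of a multiset; 1 on the empty multiset. -/
def minGrade (M : Multiset (ℝ × Grade)) : Grade :=
  (M.map Prod.snd).fold min 1

/-- Evaluation of a fuzzy aggregate on a multiset; `none` represents ⊥ (undefined). -/
def aggEval : AggFun → Multiset (ℝ × Grade) → Option (ℝ × Grade)
  | .sumF, M => some ((M.map Prod.fst).sum, minGrade M)
  | .timesF, M => some ((M.map Prod.fst).prod, minGrade M)
  | .minF, M => if M = 0 then none else some (sInf {x | x ∈ M.map Prod.fst}, minGrade M)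
  | .maxF, M => if M = 0 then none else some (sSup {x | x ∈ M.map Prod.fst}, minGrade M)
  | .countF, M => some ((Multiset.card M : ℝ), minGrade M)

/-- A body element: an atom or a ground fuzzy aggregate atom f(S) ≺ T. -/
inductive BodyAtom (Atom : Type)
  | atom (a : Atom)
  | agg (f : AggFun) (S : GroundFuzzySet Atom) (op : CmpOp) (T : ℝ)

/-- A body literal: a possibly negated annotated body atom. -/
structure BodyLit (Atom : Type) where
  neg : Bool
  batom : BodyAtom Atom
  grade : Grade

/-- A ground DFLP^FA rule: annotated head disjuncts and a body of literals. -/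
structure Rule (Atom : Type) where
  head : List (Atom × Grade)
  body : List (BodyLit Atom)

/-- Satisfaction of an annotated (non-negated) body atom. -/
def satBodyAtom {Atom : Type} (I : Atom → Grade) : BodyAtom Atom → Grade → Prop
  | .atom a, μ => μ ≤ I a
  | .agg f S op T, μ =>
      ∃ x ν, aggEval f (fuzzySetEval I S) = some (x, ν) ∧ CmpOp.apply op x T ∧ μ ≤ ν

/-- Satisfaction of a body literal (negation is failure of satisfaction). -/
def satLit {Atom : Type} (I : Atom → Grade) (l : BodyLit Atom) : Prop :=
  if l.neg then ¬ satBodyAtom I l.batom l.grade else satBodyAtom I l.batom l.grade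

def satBody {Atom : Type} (I : Atom → Grade) (r : Rule Atom) : Prop :=
  ∀ l ∈ r.body, satLit I l

def satHead {Atom : Type} (I : Atom → Grade) (r : Rule Atom) : Prop :=
  ∃ h ∈ r.head, h.2 ≤ I h.1

def satRule {Atom : Type} (I : Atom → Grade) (r : Rule Atom) : Prop :=
  satBody I r → satHead I r

/-- I is a fuzzy model of Π: I satisfies every rule and, for every atom a,
max{{ μ | some rule r ∈ Π has I satisfying body(r) and a:μ a head disjunct satisfied by I }} ≤ I(a). -/
def isFuzzyModel {Atom : Type} (I : Atom → Grade) (P : Set (Rule Atom)) : Prop :=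
  (∀ r ∈ P, satRule I r) ∧
  ∀ a μ, (∃ r ∈ P, satBody I r ∧ (a, μ) ∈ r.head ∧ μ ≤ I a) → μ ≤ I a

/-- ≤-minimal fuzzy model: no fuzzy model I' with I' < I (pointwise I' ≤ I and I' ≠ I). -/
def isMinimalFuzzyModel {Atom : Type} (I : Atom → Grade) (P : Set (Rule Atom)) : Prop :=
  isFuzzyModel I P ∧ ¬ ∃ I' : Atom → Grade, isFuzzyModel I' P ∧ I' ≤ I ∧ I' ≠ I

/-- The fuzzy reduct Π^I = { r ∈ Π | I satisfies body(r) }. -/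
def fuzzyReduct {Atom : Type} (P : Set (Rule Atom)) (I : Atom → Grade) : Set (Rule Atom) :=
  {r ∈ P | satBody I r}

/-- I is a fuzzy answer set of Π iff I is a ≤-minimal fuzzy model of Π^I. -/
def isFuzzyAnswerSet {Atom : Type} (I : Atom → Grade) (P : Set (Rule Atom)) : Prop :=
  isMinimalFuzzyModel I (fuzzyReduct P I)

end

noncomputable section

/-- An element ⟨X | C⟩ of a classical ground aggregate set: a real term X and a
finite conjunction C of ground atoms. -/
structure CPair (Atom : Type) where
  term : ℝ
  conj : List Atom

/-- A classical ground aggregate set. -/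
abbrev CSet (Atom : Type) := Finset (CPair Atom)

/-- A classical body element: an atom or a ground classical aggregate atom f{S} ≺ T. -/
inductive CBodyAtom (Atom : Type)
  | atom (a : Atom)
  | agg (f : AggFun) (S : CSet Atom) (op : CmpOp) (T : ℝ)

/-- A classical body literal (possibly negated). -/
structure CLit (Atom : Type) where
  neg : Bool
  batom : CBodyAtom Atom

/-- A ground classical disjunctive rule. -/
structure CRule (Atom : Type) where
  head : List Atom
  body : List (CLit Atom)

/-- S_I : the multiset {{ X | ⟨X | C⟩ ∈ S and every atom of C is in I }}. -/
def cSetEval {Atom : Type} (I : Set Atom) (S : CSet Atom) : Multiset ℝ :=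
  (S.val.filter (fun p => ∀ a ∈ p.conj, a ∈ I)).map CPair.term

/-- Evaluation of a classical aggregate; `none` means undefined. -/
def cAggEval : AggFun → Multiset ℝ → Option ℝ
  | .sumF, M => some M.sum
  | .timesF, M => some M.prod
  | .minF, M => if M = 0 then none else some (sInf {x | x ∈ M})
  | .maxF, M => if M = 0 then none else some (sSup {x | x ∈ M})
  | .countF, M => some (Multiset.card M : ℝ)

def cSatBodyAtom {Atom : Type} (I : Set Atom) : CBodyAtom Atom → Prop
  | .atom a => a ∈ I
  | .agg f S op T => ∃ x, cAggEval f (cSetEval I S) = some x ∧ CmpOp.apply op x T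

def cSatLit {Atom : Type} (I : Set Atom) (l : CLit Atom) : Prop :=
  if l.neg then ¬ cSatBodyAtom I l.batom else cSatBodyAtom I l.batom

def cSatBody {Atom : Type} (I : Set Atom) (r : CRule Atom) : Prop :=
  ∀ l ∈ r.body, cSatLit I l

def cSatHead {Atom : Type} (I : Set Atom) (r : CRule Atom) : Prop :=
  ∃ a ∈ r.head, a ∈ I

def cSatRule {Atom : Type} (I : Set Atom) (r : CRule Atom) : Prop :=
  cSatBody I r → cSatHead I r

/-- I is a classical model of a program iff it satisfies all its rules. -/
def cModel {Atom : Type} (I : Set Atom) (P : Set (CRule Atom)) : Prop :=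
  ∀ r ∈ P, cSatRule I r

/-- The DLP^A reduct Π^I = { r ∈ Π | I satisfies body(r) }. -/
def cReduct {Atom : Type} (P : Set (CRule Atom)) (I : Set Atom) : Set (CRule Atom) :=
  {r ∈ P | cSatBody I r}

/-- I is a classical answer set of Π iff I is a ⊆-minimal classical model of Π^I. -/
def cAnswerSet {Atom : Type} (I : Set Atom) (P : Set (CRule Atom)) : Prop :=
  cModel I (cReduct P I) ∧ ¬ ∃ I' : Set Atom, cModel I' (cReduct P I) ∧ I' ⊂ I

/-- Translation: annotate a classical aggregate-set element with the fuzzy annotation 1. -/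
def trPair {Atom : Type} (p : CPair Atom) : FuzzyPair Atom :=
  ⟨p.term, 1, p.conj.map (fun a => (a, 1))⟩

def trSet {Atom : Type} (S : CSet Atom) : GroundFuzzySet Atom := S.image trPair

def trBodyAtom {Atom : Type} : CBodyAtom Atom → BodyAtom Atom
  | .atom a => .atom a
  | .agg f S op T => .agg f (trSet S) op T

def trLit {Atom : Type} (l : CLit Atom) : BodyLit Atom := ⟨l.neg, trBodyAtom l.batom, 1⟩

/-- Translation of a classical rule: annotate every head and body element with 1. -/
def trRule {Atom : Type} (r : CRule Atom) : Rule Atom :=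
  ⟨r.head.map (fun a => (a, 1)), r.body.map trLit⟩

/-- The DFLP₁^FA program corresponding to a classical program. -/
def trProg {Atom : Type} (P : Set (CRule Atom)) : Set (Rule Atom) := trRule '' P

end

section AuxEmbed

variable {Atom : Type}

/-- The crisp "support" set of a fuzzy interpretation. -/
def KSet (J : Atom → Grade) : Set Atom := {a | (1 : Grade) ≤ J a}

lemma grade_le_one (x : Grade) : x ≤ 1 := by
  rw [← Subtype.coe_le_coe]; simpa using x.2.2

lemma grade_zero_le (x : Grade) : (0 : Grade) ≤ x := by
  rw [← Subtype.coe_le_coe]; simpa using x.2.1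

lemma not_one_le_zero : ¬ ((1 : Grade) ≤ (0 : Grade)) := by
  intro h
  have := Subtype.coe_le_coe.mpr h
  norm_num at this

lemma trPair_inj : Function.Injective (trPair (Atom := Atom)) := by
  intro p q h
  have hinj : Function.Injective (fun a : Atom => (a, (1 : Grade))) :=
    fun a b hab => congrArg Prod.fst hab
  cases p; cases q
  simp only [trPair, FuzzyPair.mk.injEq] at h
  obtain ⟨h1, -, h3⟩ := h
  simp [h1, List.map_injective_iff.mpr hinj h3]

lemma conjTrue_tr (J : Atom → Grade) (C : List Atom) :
    conjTrue J (C.map (fun a => (a, (1 : Grade)))) ↔ ∀ a ∈ C, a ∈ KSet J := by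
  simp [conjTrue, KSet]

lemma fuzzySetEval_tr (J : Atom → Grade) (S : CSet Atom) :
    fuzzySetEval J (trSet S) = (cSetEval (KSet J) S).map (fun x => (x, (1 : Grade))) := by
  unfold fuzzySetEval trSet cSetEval
  rw [Finset.image_val, Multiset.dedup_eq_self.mpr (S.nodup.map trPair_inj),
    Multiset.filter_map, Multiset.map_map, Multiset.map_map]
  have hf : Multiset.filter ((fun p => conjTrue J p.conj) ∘ trPair) S.val =
      Multiset.filter (fun p => ∀ a ∈ p.conj, a ∈ KSet J) S.val :=
    Multiset.filter_congr (fun p _ => by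
      simpa [trPair, Function.comp] using conjTrue_tr J p.conj)
  rw [hf]
  exact Multiset.map_congr rfl (fun p _ => rfl)

lemma map_one_fst (N : Multiset ℝ) :
    ((N.map (fun x => (x, (1 : Grade)))).map Prod.fst) = N := by
  rw [Multiset.map_map]; simp

lemma minGrade_map_one (N : Multiset ℝ) :
    minGrade (N.map (fun x => (x, (1 : Grade)))) = 1 := by
  unfold minGrade
  rw [Multiset.map_map]
  induction N using Multiset.induction with
  | empty => simp
  | cons a s ih =>
      simp only [Multiset.map_cons, Multiset.fold_cons_left, Function.comp_apply] at ih ⊢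
      rw [ih]; simp

lemma aggEval_tr (f : AggFun) (N : Multiset ℝ) :
    aggEval f (N.map (fun x => (x, (1 : Grade)))) =
      (cAggEval f N).map (fun x => (x, (1 : Grade))) := by
  cases f <;>
    simp only [aggEval, cAggEval, map_one_fst, minGrade_map_one, Multiset.card_map,
      Multiset.map_eq_zero, Option.map_some, Option.map_none] <;>
    split_ifs <;> simp

lemma satBodyAtom_tr (J : Atom → Grade) (b : CBodyAtom Atom) :
    satBodyAtom J (trBodyAtom b) 1 ↔ cSatBodyAtom (KSet J) b := by
  cases b with
  | atom a => exact Iff.rfl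
  | agg f S op T =>
      simp only [trBodyAtom, satBodyAtom, cSatBodyAtom, fuzzySetEval_tr, aggEval_tr]
      constructor
      · rintro ⟨x, ν, h, hop, -⟩
        cases hc : cAggEval f (cSetEval (KSet J) S) with
        | none => rw [hc] at h; simp at h
        | some y =>
            rw [hc] at h
            simp only [Option.map_some, Option.some.injEq, Prod.mk.injEq] at h
            exact ⟨y, rfl, h.1 ▸ hop⟩
      · rintro ⟨x, hx, hop⟩
        exact ⟨x, 1, by rw [hx]; rfl, hop, le_refl _⟩

lemma satLit_tr (J : Atom → Grade) (l : CLit Atom) :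
    satLit J (trLit l) ↔ cSatLit (KSet J) l := by
  unfold satLit cSatLit trLit
  cases l.neg <;> simp [satBodyAtom_tr]

lemma satBody_tr (J : Atom → Grade) (r : CRule Atom) :
    satBody J (trRule r) ↔ cSatBody (KSet J) r := by
  unfold satBody cSatBody trRule
  simp [satLit_tr]

lemma satHead_tr (J : Atom → Grade) (r : CRule Atom) :
    satHead J (trRule r) ↔ cSatHead (KSet J) r := by
  unfold satHead cSatHead trRule
  simp [KSet]

lemma satRule_tr (J : Atom → Grade) (r : CRule Atom) :
    satRule J (trRule r) ↔ cSatRule (KSet J) r := by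
  unfold satRule cSatRule
  rw [satBody_tr, satHead_tr]

lemma isFuzzyModel_tr (J : Atom → Grade) (Q : Set (CRule Atom)) :
    isFuzzyModel J (trProg Q) ↔ cModel (KSet J) Q := by
  constructor
  · rintro ⟨h1, -⟩ r hr
    exact (satRule_tr J r).mp (h1 (trRule r) ⟨r, hr, rfl⟩)
  · intro h
    refine ⟨?_, ?_⟩
    · rintro r' ⟨r, hr, rfl⟩
      exact (satRule_tr J r).mpr (h r hr)
    · rintro a μ ⟨-, -, -, -, h⟩
      exact h

lemma fuzzyReduct_tr (J : Atom → Grade) (P : Set (CRule Atom)) :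
    fuzzyReduct (trProg P) J = trProg (cReduct P (KSet J)) := by
  ext r'
  constructor
  · rintro ⟨⟨r, hr, rfl⟩, hb⟩
    exact ⟨r, ⟨hr, (satBody_tr J r).mp hb⟩, rfl⟩
  · rintro ⟨r, ⟨hr, hb⟩, rfl⟩
    exact ⟨⟨r, hr, rfl⟩, (satBody_tr J r).mpr hb⟩

end AuxEmbed

/-- Let Π be a ground DLP^A program and Π' its DFLP₁^FA translation (every atom
and aggregate annotated with 1). Let I ⊆ B_L be a classical interpretation, and I' the fuzzy
interpretation with I'(a) = 1 if a ∈ I and I'(a) = 0 otherwise. Then I' is a fuzzy answer set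
of Π' iff I is a classical answer set of Π. -/
theorem fuzzy_answer_set_iff_classical_answer_set_DLPA {Atom : Type}
    (P : Set (CRule Atom)) (I : Set Atom) (I' : Atom → Grade)
    (hI' : ∀ a, I' a = if a ∈ I then 1 else 0) :
    isFuzzyAnswerSet I' (trProg P) ↔ cAnswerSet I P := by
  have hK : KSet I' = I := by
    ext a
    simp only [KSet, Set.mem_setOf_eq, hI' a]
    by_cases h : a ∈ I <;> simp [h, not_one_le_zero]
  have hcrisp : ∀ (J : Atom → Grade), J ≤ I' → KSet J = I → J = I' := by
    intro J hle hKJ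
    funext a
    by_cases h : a ∈ I
    · have h1 : (1 : Grade) ≤ J a := by rw [← hKJ] at h; exact h
      rw [hI' a, if_pos h]
      exact le_antisymm (grade_le_one _) h1
    · have h0 : J a ≤ I' a := hle a
      rw [hI' a, if_neg h] at h0 ⊢
      exact le_antisymm h0 (grade_zero_le _)
  unfold isFuzzyAnswerSet isMinimalFuzzyModel cAnswerSet
  rw [fuzzyReduct_tr, hK, isFuzzyModel_tr, hK]
  constructor
  · rintro ⟨h1, h2⟩
    refine ⟨h1, ?_⟩
    rintro ⟨I'', hm, hsub⟩
    refine h2 ⟨fun a => if a ∈ I'' then 1 else 0, ?_, ?_, ?_⟩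
    · rw [isFuzzyModel_tr]
      have hKJ : KSet (fun a => if a ∈ I'' then 1 else 0) = I'' := by
        ext a
        simp only [KSet, Set.mem_setOf_eq]
        by_cases h : a ∈ I'' <;> simp [h, not_one_le_zero]
      rw [hKJ]; exact hm
    · intro a
      dsimp only
      rw [hI' a]
      by_cases h : a ∈ I''
      · rw [if_pos h, if_pos (hsub.1 h)]
      · rw [if_neg h]
        exact grade_zero_le _
    · intro heq
      obtain ⟨a, haI, haI''⟩ := Set.exists_of_ssubset hsub
      have := congrFun heq a
      rw [hI' a, if_neg haI'', if_pos haI] at this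
      exact not_one_le_zero (this ▸ le_refl _)
  · rintro ⟨h1, h2⟩
    refine ⟨h1, ?_⟩
    rintro ⟨J, hm, hle, hne⟩
    rw [isFuzzyModel_tr] at hm
    have hsub : KSet J ⊆ I := by
      intro a ha
      have : (1 : Grade) ≤ J a := ha
      have h2' : (1 : Grade) ≤ I' a := this.trans (hle a)
      by_contra h
      rw [hI' a, if_neg h] at h2'
      exact not_one_le_zero h2'
    have hne' : KSet J ≠ I := fun h => hne (hcrisp J hle h)
    exact h2 ⟨KSet J, hm, hsub.ssubset_of_ne hne'⟩
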